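/- The distribution function F : [0,1] → [0,1] defined by F(x) = μ([0,x]) (with F(1) := 1) is Hölder continuous with exponent log₂(3/τ), where τ = (1+√5)/2 is the golden ratio. -/

import Mathlib

open MeasureTheory Filter Topology Real
open scoped ENNReal NNReal

noncomputable section

set_option maxHeartbeats 1000000

/-- Stern's diatomic sequence: s(0)=0, s(1)=1, s(2n)=s(n), s(2n+1)=s(n)+s(n+1). -/
def stern : ℕ → ℕ
  | 0 => 0
  | 1 => 1
  | n + 2 =>
    if h : n % 2 = 0 then stern (n / 2 + 1)
    else stern (n / 2 + 1) + stern (n / 2 + 2)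
decreasing_by all_goals omega
/-- The probability measure μ_n = 3^{-n} ∑_{m=0}^{2^n-1} s(2^n+m) δ_{m/2^n} on the 1-torus. -/
def sternMeasure (n : ℕ) : Measure UnitAddCircle :=
  ((3 : ℝ≥0∞) ^ n)⁻¹ • ∑ m ∈ Finset.range (2 ^ n),
    (stern (2 ^ n + m) : ℝ≥0∞) • Measure.dirac ((m / 2 ^ n : ℝ) : UnitAddCircle)

lemma stern_zero : stern 0 = 0 := by simp [stern]

lemma stern_one : stern 1 = 1 := by simp [stern]

lemma stern_two_mul : ∀ n, stern (2 * n) = stern n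
  | 0 => rfl
  | n + 1 => by
    show stern (2 * n + 2) = _
    rw [stern]
    simp [Nat.mul_div_cancel_left, Nat.mul_mod_right]

lemma stern_two_mul_add_one : ∀ n, stern (2 * n + 1) = stern n + stern (n + 1)
  | 0 => by simp [stern]
  | n + 1 => by
    show stern (2 * n + 1 + 2) = _
    rw [stern]
    have h : (2 * n + 1) % 2 = 1 := by omega
    have h1 : (2 * n + 1) / 2 + 1 = n + 1 := by omega
    have h2 : (2 * n + 1) / 2 + 2 = n + 2 := by omega
    simp [h, h1, h2]

lemma stern_two : stern 2 = 1 := by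
  rw [show (2:ℕ) = 2 * 1 by rfl, stern_two_mul, stern_one]

lemma stern_bounds : ∀ n : ℕ, (∀ m, m ≤ 2 ^ n → stern (2 ^ n + m) ≤ Nat.fib (n + 2)) ∧
    (∀ m, m < 2 ^ n → stern (2 ^ n + m) + stern (2 ^ n + m + 1) ≤ Nat.fib (n + 3)) := by
  intro n
  induction n with
  | zero =>
    constructor
    · intro m hm
      interval_cases m
      · simp [stern_one, Nat.fib]
      · simp [show (2:ℕ)^0 + 1 = 2 by norm_num, stern_two, Nat.fib]
    · intro m hm
      interval_cases m
      simp [stern_one, show (2:ℕ)^0 + 0 + 1 = 2 by norm_num, stern_two]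
      decide
  | succ n ih =>
    obtain ⟨H1, H2⟩ := ih
    have key : ∀ i, stern (2 ^ (n+1) + 2 * i) = stern (2 ^ n + i) := by
      intro i
      rw [show 2 ^ (n+1) + 2 * i = 2 * (2 ^ n + i) by ring, stern_two_mul]
    have key2 : ∀ i, stern (2 ^ (n+1) + (2 * i + 1)) = stern (2 ^ n + i) + stern (2 ^ n + i + 1) := by
      intro i
      rw [show 2 ^ (n+1) + (2 * i + 1) = 2 * (2 ^ n + i) + 1 by ring, stern_two_mul_add_one]
    have hfib : Nat.fib (n+2) + Nat.fib (n+3) = Nat.fib (n+4) := (Nat.fib_add_two).symm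
    have hmono : Nat.fib (n+2) ≤ Nat.fib (n+3) := Nat.fib_le_fib_succ
    constructor
    · intro m hm
      rcases Nat.even_or_odd m with ⟨i, rfl⟩ | ⟨i, rfl⟩
      · rw [show i + i = 2 * i by ring, key i]
        have := H1 i (by omega)
        show _ ≤ Nat.fib (n + 3)
        omega
      · rw [key2 i]
        have := H2 i (by omega)
        show _ ≤ Nat.fib (n + 3)
        omega
    · intro m hm
      rcases Nat.even_or_odd m with ⟨i, rfl⟩ | ⟨i, rfl⟩
      · have hi : i < 2 ^ n := by omega
        rw [show i + i = 2 * i by ring,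
          show 2 ^ (n+1) + 2 * i + 1 = 2 ^ (n+1) + (2 * i + 1) by ring, key i, key2 i]
        have := H1 i (by omega)
        have := H2 i hi
        show _ ≤ Nat.fib (n + 4)
        omega
      · have hi : i < 2 ^ n := by omega
        rw [key2 i, show 2 ^ (n+1) + (2*i+1) + 1 = 2 ^ (n+1) + 2*(i+1) by ring, key (i+1)]
        have := H1 (i+1) (by omega)
        have := H2 i hi
        show _ ≤ Nat.fib (n + 4)
        omega

lemma stern_pair_le : ∀ n m : ℕ, m < 2 ^ n →
    stern (2 ^ n + m) + stern (2 ^ n + m + 1) ≤ Nat.fib (n + 3) :=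
  fun n m hm => (stern_bounds n).2 m hm

lemma stern_block : ∀ r n m : ℕ, m < 2 ^ n →
    ∑ j ∈ Finset.range (2 ^ r), stern (2 ^ (n + r) + m * 2 ^ r + j)
      ≤ 3 ^ r * (stern (2 ^ n + m) + stern (2 ^ n + m + 1)) := by
  intro r
  induction r with
  | zero => intro n m _; simp
  | succ r ih =>
    intro n m hm
    have h2r : (0:ℕ) ≤ 2 ^ r := Nat.zero_le _
    have hle : (2:ℕ) ^ r ≤ 2 ^ (r+1) := by rw [pow_succ]; omega
    have hsub : (2:ℕ) ^ (r+1) - 2 ^ r = 2 ^ r := by rw [pow_succ]; omega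
    have hsplit : ∑ j ∈ Finset.range (2 ^ (r+1)), stern (2 ^ (n + (r+1)) + m * 2 ^ (r+1) + j)
        = (∑ j ∈ Finset.range (2 ^ r), stern (2 ^ ((n+1) + r) + (2*m) * 2 ^ r + j))
          + ∑ j ∈ Finset.range (2 ^ r), stern (2 ^ ((n+1) + r) + (2*m+1) * 2 ^ r + j) := by
      rw [Finset.range_eq_Ico, ← Finset.sum_Ico_consecutive _ (Nat.zero_le (2^r)) hle]
      congr 1
      · rw [← Finset.range_eq_Ico]
        apply Finset.sum_congr rfl; intro j _; congr 1; ring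
      · rw [Finset.sum_Ico_eq_sum_range, hsub]
        apply Finset.sum_congr rfl; intro j _; congr 1; ring
    rw [hsplit]
    have h1 := ih (n+1) (2*m) (by omega)
    have h2 := ih (n+1) (2*m+1) (by omega)
    have e1 : stern (2 ^ (n+1) + 2*m) = stern (2 ^ n + m) := by
      rw [show 2 ^ (n+1) + 2*m = 2 * (2 ^ n + m) by ring, stern_two_mul]
    have e2 : stern (2 ^ (n+1) + 2*m + 1) = stern (2 ^ n + m) + stern (2 ^ n + m + 1) := by
      rw [show 2 ^ (n+1) + 2*m + 1 = 2 * (2 ^ n + m) + 1 by ring, stern_two_mul_add_one]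
    have e3 : stern (2 ^ (n+1) + (2*m+1) + 1) = stern (2 ^ n + m + 1) := by
      rw [show 2 ^ (n+1) + (2*m+1) + 1 = 2 * (2 ^ n + m + 1) by ring, stern_two_mul]
    have e2' : stern (2 ^ (n+1) + (2*m+1)) = stern (2 ^ n + m) + stern (2 ^ n + m + 1) := by
      rw [show 2 ^ (n+1) + (2*m+1) = 2 ^ (n+1) + 2*m + 1 by ring, e2]
    rw [e1, e2] at h1
    rw [e2', e3] at h2
    have : (3:ℕ) ^ (r+1) * (stern (2^n+m) + stern (2^n+m+1))
        = 3 ^ r * (stern (2^n+m) + (stern (2^n+m) + stern (2^n+m+1)))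
          + 3 ^ r * ((stern (2^n+m) + stern (2^n+m+1)) + stern (2^n+m+1)) := by ring
    omega

lemma fib_le_gold_pow : ∀ n : ℕ, (Nat.fib (n+1) : ℝ) ≤ goldenRatio ^ n ∧
    (Nat.fib (n+2) : ℝ) ≤ goldenRatio ^ (n+1) := by
  intro n
  induction n with
  | zero => constructor <;> simp [Nat.fib, one_lt_goldenRatio.le]
  | succ n ih =>
    obtain ⟨h1, h2⟩ := ih
    refine ⟨h2, ?_⟩
    have : (Nat.fib (n+3) : ℝ) = Nat.fib (n+2) + Nat.fib (n+1) := by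
      rw [show n+3 = (n+1)+2 by ring, Nat.fib_add_two]; push_cast; ring
    rw [show n+1+2 = n+3 by ring, this]
    calc (Nat.fib (n+2):ℝ) + Nat.fib (n+1) ≤ goldenRatio ^ (n+1) + goldenRatio ^ n := by
          exact add_le_add h2 h1
    _ = goldenRatio ^ n * (goldenRatio + 1) := by ring
    _ = goldenRatio ^ n * goldenRatio ^ 2 := by rw [goldenRatio_sq]
    _ = goldenRatio ^ (n+2) := by ring

lemma sqrt5_gt_two : (2:ℝ) < Real.sqrt 5 := by
  rw [show (2:ℝ) = Real.sqrt 4 by rw [show (4:ℝ) = 2^2 by norm_num, Real.sqrt_sq]; norm_num]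
  exact Real.sqrt_lt_sqrt (by norm_num) (by norm_num)

lemma gold_lt_three_halves' : (3:ℝ) < 2 * goldenRatio := by
  rw [goldenRatio]; nlinarith [sqrt5_gt_two]

lemma three_div_gold_pos : (0:ℝ) < 3 / goldenRatio := by positivity

lemma alpha_nonneg : 0 ≤ Real.logb 2 (3 / goldenRatio) := by
  apply Real.logb_nonneg (by norm_num)
  rw [le_div_iff₀ goldenRatio_pos]
  nlinarith [goldenRatio_lt_two]

lemma alpha_le_one : Real.logb 2 (3 / goldenRatio) ≤ 1 := by
  have h : (3:ℝ) / goldenRatio ≤ 2 := by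
    rw [div_le_iff₀ goldenRatio_pos]; nlinarith [gold_lt_three_halves']
  calc Real.logb 2 (3 / goldenRatio) ≤ Real.logb 2 2 :=
        Real.logb_le_logb_of_le (by norm_num) three_div_gold_pos h
  _ = 1 := Real.logb_self_eq_one (by norm_num)

lemma two_rpow_alpha : (2:ℝ) ^ (Real.logb 2 (3 / goldenRatio)) = 3 / goldenRatio :=
  Real.rpow_logb (by norm_num) (by norm_num) three_div_gold_pos

lemma coe_eq_coe_unit {a b : ℝ} (h : (a : UnitAddCircle) = (b : ℝ)) : ∃ z : ℤ, a = b + z := by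
  have h0 : ((a - b : ℝ) : UnitAddCircle) = 0 := by
    rw [AddCircle.coe_sub, h]; abel
  obtain ⟨z, hz⟩ := (AddCircle.coe_eq_zero_iff (1:ℝ)).mp h0
  refine ⟨z, ?_⟩
  have : (z:ℝ) = a - b := by simpa using hz
  linarith

lemma mem_blocks {n d m j : ℕ} (hn : 3 ≤ n) (hm : m < 2 ^ n) (hj : j < 2 ^ (n + d))
    (hmem : (((j : ℝ) / 2 ^ (n + d) : ℝ) : UnitAddCircle) ∈
      (fun y : ℝ => (y : UnitAddCircle)) '' Set.Ioo (((m:ℝ)-1)/2^n) (((m:ℝ)+3)/2^n)) :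
    (m ≤ j / 2 ^ d + 1 ∧ j / 2 ^ d ≤ m + 2) ∨ j / 2 ^ d ≤ 2 ∨ 2 ^ n - 2 ≤ j / 2 ^ d := by
  obtain ⟨t, ht, hteq⟩ := hmem
  obtain ⟨z, hz⟩ := coe_eq_coe_unit hteq
  have hA : (0:ℝ) < 2 ^ n := by positivity
  have hB : (0:ℝ) < 2 ^ d := by positivity
  have hK : ((2:ℝ)) ^ (n + d) = 2 ^ n * 2 ^ d := pow_add 2 n d
  have hKpos : (0:ℝ) < 2 ^ (n + d) := by positivity
  have hj' : (j:ℝ) < 2 ^ (n + d) := by exact_mod_cast hj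
  have hjnn : (0:ℝ) ≤ (j:ℝ) := Nat.cast_nonneg j
  have hmR : (m:ℝ) < 2 ^ n := by exact_mod_cast hm
  have hmnn : (0:ℝ) ≤ (m:ℝ) := Nat.cast_nonneg m
  have h2n : (8:ℝ) ≤ 2 ^ n := by
    calc (8:ℝ) = 2^3 := by norm_num
    _ ≤ 2^n := by apply pow_le_pow_right₀ (by norm_num) hn
  have hred : ∀ x : ℝ, x / 2 ^ (n + d) * 2 ^ n = x / 2 ^ d := by
    intro x; rw [hK]; field_simp
  set q : ℕ := j / 2 ^ d with hq
  have hqlt : j < (q + 1) * 2 ^ d := (Nat.div_lt_iff_lt_mul (Nat.two_pow_pos _)).mp (Nat.lt_succ_self q)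
  have hqltR : (j:ℝ) < ((q:ℝ) + 1) * 2 ^ d := by exact_mod_cast hqlt
  have hjq : (j:ℝ) / 2 ^ d < (q:ℝ) + 1 := by rw [div_lt_iff₀ hB]; exact hqltR
  -- t bounds
  have ht1 : ((m:ℝ)-1) < t * 2 ^ n := by
    rw [← div_lt_iff₀ hA]; exact ht.1
  have ht2 : t * 2 ^ n < (m:ℝ)+3 := by
    rw [← lt_div_iff₀ hA]; exact ht.2
  have htlow : (-1:ℝ) < t := by
    by_contra hcon
    push_neg at hcon
    have := mul_le_mul_of_nonneg_right hcon hA.le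
    nlinarith
  have hthigh : t < 2 := by
    by_contra hcon
    push_neg at hcon
    have := mul_le_mul_of_nonneg_right hcon hA.le
    nlinarith
  have hu1 : (0:ℝ) ≤ (j:ℝ) / 2 ^ (n+d) := by positivity
  have hu2 : (j:ℝ) / 2 ^ (n+d) < 1 := by rw [div_lt_one hKpos]; exact hj'
  have hz12 : z = -1 ∨ z = 0 ∨ z = 1 := by
    have h1 : (-2:ℝ) < (z:ℝ) := by nlinarith
    have h2 : (z:ℝ) < 2 := by nlinarith
    have h1' : (-2:ℤ) < z := by exact_mod_cast h1
    have h2' : (z:ℤ) < 2 := by exact_mod_cast h2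
    omega
  rcases hz12 with rfl | rfl | rfl
  · -- z = -1 : t = j/2^K - 1
    right; right
    have hteq' : t = (j:ℝ)/2^(n+d) - 1 := by rw [hz]; push_cast; ring
    rw [hteq'] at ht1
    have : ((m:ℝ)-1) < (j:ℝ)/2^d - 2^n := by
      have := hred (j:ℝ)
      nlinarith
    have hlt : ((2:ℝ)^n - 1) * 2^d < (j:ℝ) := by
      rw [← lt_div_iff₀ hB]; nlinarith
    have h1 : (1:ℕ) ≤ 2^n := Nat.one_le_two_pow
    have hcast : (((2^n - 1) * 2^d : ℕ) : ℝ) = ((2:ℝ)^n - 1) * 2^d := by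
      push_cast [h1]; ring
    have hnat : (2^n - 1) * 2^d < j := by
      have h2 : (((2^n - 1) * 2^d : ℕ) : ℝ) < (j:ℝ) := by rw [hcast]; exact hlt
      exact_mod_cast h2
    have : 2^n - 1 ≤ q := (Nat.le_div_iff_mul_le (Nat.two_pow_pos _)).mpr hnat.le
    omega
  · -- z = 0
    left
    have hteq' : t = (j:ℝ)/2^(n+d) := by rw [hz]; push_cast; ring
    rw [hteq'] at ht1 ht2
    have hup : (j:ℝ)/2^d < (m:ℝ)+3 := by
      have := hred (j:ℝ); nlinarith
    have hnat : j < (m+3) * 2^d := by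
      have : (j:ℝ) < ((m:ℝ)+3) * 2^d := by rw [← div_lt_iff₀ hB] at *; exact hup
      exact_mod_cast this
    have h1 : q < m + 3 := (Nat.div_lt_iff_lt_mul (Nat.two_pow_pos _)).mpr hnat
    have hlow : ((m:ℝ)-1) < (j:ℝ)/2^d := by
      have := hred (j:ℝ); nlinarith
    have h2 : (m:ℝ) < (q:ℝ) + 2 := by nlinarith
    have h2' : m < q + 2 := by exact_mod_cast h2
    omega
  · -- z = 1
    right; left
    have hteq' : t = (j:ℝ)/2^(n+d) + 1 := by rw [hz]; push_cast; ring
    rw [hteq'] at ht2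
    have hup : (j:ℝ)/2^d < 3 := by
      have := hred (j:ℝ); nlinarith
    have hnat : j < 3 * 2^d := by
      have : (j:ℝ) < 3 * 2^d := by rw [← div_lt_iff₀ hB] at *; exact hup
      exact_mod_cast this
    have h1 : q < 3 := (Nat.div_lt_iff_lt_mul (Nat.two_pow_pos _)).mpr hnat
    omega

open scoped Classical in
lemma sum_filter_le {n d m : ℕ} (hn : 3 ≤ n) (hm : m < 2 ^ n) :
    ∑ j ∈ (Finset.range (2 ^ (n + d))).filter
      (fun j : ℕ => ((j / 2 ^ (n + d) : ℝ) : UnitAddCircle) ∈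
        (fun y : ℝ => (y : UnitAddCircle)) '' Set.Ioo (((m:ℝ)-1)/2^n) (((m:ℝ)+3)/2^n)),
      stern (2 ^ (n + d) + j) ≤ 9 * (3 ^ d * Nat.fib (n + 3)) := by
  classical
  set S : Finset ℕ :=
    ({m-1, m, m+1, m+2, 0, 1, 2, 2^n-2, 2^n-1} : Finset ℕ).filter (· < 2^n) with hS
  have hcard : S.card ≤ 9 := by
    have step : ∀ (a : ℕ) (s : Finset ℕ) (c : ℕ), s.card ≤ c → (insert a s).card ≤ c + 1 :=
      fun a s c h => (Finset.card_insert_le a s).trans (by omega)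
    refine (Finset.card_filter_le _ _).trans ?_
    refine step _ _ _ (step _ _ _ (step _ _ _ (step _ _ _ (step _ _ _ (step _ _ _
      (step _ _ _ (step _ _ _ ?_)))))))
    simp
  have hsub : (Finset.range (2 ^ (n + d))).filter
      (fun j : ℕ => ((j / 2 ^ (n + d) : ℝ) : UnitAddCircle) ∈
        (fun y : ℝ => (y : UnitAddCircle)) '' Set.Ioo (((m:ℝ)-1)/2^n) (((m:ℝ)+3)/2^n))
      ⊆ S.biUnion (fun q => (Finset.range (2 ^ d)).image (fun r => q * 2 ^ d + r)) := by
    intro j hj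
    rw [Finset.mem_filter, Finset.mem_range] at hj
    obtain ⟨hjlt, hjmem⟩ := hj
    have hdisj := mem_blocks hn hm hjlt hjmem
    have hqlt : j / 2 ^ d < 2 ^ n := by
      apply (Nat.div_lt_iff_lt_mul (Nat.two_pow_pos _)).mpr
      rw [← pow_add]; exact hjlt
    obtain ⟨q, hqdef⟩ : ∃ q, j / 2 ^ d = q := ⟨_, rfl⟩
    rw [hqdef] at hdisj hqlt
    rw [Finset.mem_biUnion]
    refine ⟨q, ?_, ?_⟩
    · rw [hS, Finset.mem_filter, Finset.mem_insert, Finset.mem_insert, Finset.mem_insert,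
        Finset.mem_insert, Finset.mem_insert, Finset.mem_insert, Finset.mem_insert,
        Finset.mem_insert, Finset.mem_singleton]
      constructor
      · omega
      · exact hqlt
    · rw [Finset.mem_image]
      exact ⟨j % 2 ^ d, Finset.mem_range.mpr (Nat.mod_lt _ (Nat.two_pow_pos _)),
        by rw [mul_comm, ← hqdef]; exact Nat.div_add_mod j (2^d)⟩
  have hdisj : ∀ q1 ∈ (S : Set ℕ), ∀ q2 ∈ (S : Set ℕ), q1 ≠ q2 →
      Disjoint ((Finset.range (2 ^ d)).image (fun r => q1 * 2 ^ d + r))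
        ((Finset.range (2 ^ d)).image (fun r => q2 * 2 ^ d + r)) := by
    intro q1 _ q2 _ hne
    rw [Finset.disjoint_left]
    intro a ha1 ha2
    rw [Finset.mem_image] at ha1 ha2
    obtain ⟨r1, hr1, he1⟩ := ha1
    obtain ⟨r2, hr2, he2⟩ := ha2
    rw [Finset.mem_range] at hr1 hr2
    apply hne
    have e1 : a / 2 ^ d = q1 := by
      rw [← he1, mul_comm, Nat.mul_add_div (Nat.two_pow_pos _), Nat.div_eq_of_lt hr1]
      omega
    have e2 : a / 2 ^ d = q2 := by
      rw [← he2, mul_comm, Nat.mul_add_div (Nat.two_pow_pos _), Nat.div_eq_of_lt hr2]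
      omega
    omega
  calc ∑ j ∈ (Finset.range (2 ^ (n + d))).filter _, stern (2 ^ (n + d) + j)
      ≤ ∑ j ∈ S.biUnion (fun q => (Finset.range (2 ^ d)).image (fun r => q * 2 ^ d + r)),
        stern (2 ^ (n + d) + j) := Finset.sum_le_sum_of_subset hsub
    _ = ∑ q ∈ S, ∑ j ∈ (Finset.range (2 ^ d)).image (fun r => q * 2 ^ d + r),
        stern (2 ^ (n + d) + j) := Finset.sum_biUnion hdisj
    _ ≤ ∑ _q ∈ S, 3 ^ d * Nat.fib (n + 3) := by
        apply Finset.sum_le_sum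
        intro q hq
        have hqlt : q < 2 ^ n := by
          rw [hS, Finset.mem_filter] at hq; exact hq.2
        rw [Finset.sum_image (by intro r1 _ r2 _ h; simp only at h; omega)]
        calc ∑ r ∈ Finset.range (2 ^ d), stern (2 ^ (n + d) + (q * 2 ^ d + r))
            = ∑ r ∈ Finset.range (2 ^ d), stern (2 ^ (n + d) + q * 2 ^ d + r) := by
              apply Finset.sum_congr rfl; intro r _; congr 1; ring
          _ ≤ 3 ^ d * (stern (2 ^ n + q) + stern (2 ^ n + q + 1)) := stern_block d n q hqlt
          _ ≤ 3 ^ d * Nat.fib (n + 3) :=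
              Nat.mul_le_mul_left _ (stern_pair_le n q hqlt)
    _ = S.card * (3 ^ d * Nat.fib (n + 3)) := by rw [Finset.sum_const, smul_eq_mul]
    _ ≤ 9 * (3 ^ d * Nat.fib (n + 3)) := Nat.mul_le_mul_right _ hcard

instance sternMeasure_finite (k : ℕ) : IsFiniteMeasure (sternMeasure k) := by
  constructor
  rw [sternMeasure, Measure.smul_apply, Measure.finset_sum_apply]
  simp only [Measure.smul_apply, measure_univ, smul_eq_mul, mul_one]
  have h1 : ∑ m ∈ Finset.range (2 ^ k), (stern (2 ^ k + m) : ℝ≥0∞)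
      = ((∑ m ∈ Finset.range (2 ^ k), stern (2 ^ k + m) : ℕ) : ℝ≥0∞) := by push_cast; rfl
  rw [h1]
  apply ENNReal.mul_lt_top
  · simp [ENNReal.inv_lt_top]
    positivity
  · exact ENNReal.natCast_lt_top _

lemma sternMeasure_Ioo_le {n d m : ℕ} (hn : 3 ≤ n) (hm : m < 2 ^ n) :
    sternMeasure (n + d) ((fun y : ℝ => (y : UnitAddCircle)) ''
        Set.Ioo (((m:ℝ)-1)/2^n) (((m:ℝ)+3)/2^n))
      ≤ (9 * Nat.fib (n + 3) : ℝ≥0∞) / 3 ^ n := by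
  classical
  set U : Set UnitAddCircle :=
    (fun y : ℝ => (y : UnitAddCircle)) '' Set.Ioo (((m:ℝ)-1)/2^n) (((m:ℝ)+3)/2^n) with hU
  have hUopen : IsOpen U := by
    apply QuotientAddGroup.isOpenMap_coe (G := ℝ) (N := AddSubgroup.zmultiples (1:ℝ))
    exact isOpen_Ioo
  have hUmeas : MeasurableSet U := hUopen.measurableSet
  rw [sternMeasure, Measure.smul_apply, Measure.finset_sum_apply]
  simp only [Measure.smul_apply, smul_eq_mul]
  have hpt : ∀ j, (Measure.dirac ((j / 2 ^ (n+d) : ℝ) : UnitAddCircle)) U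
      = U.indicator (1 : UnitAddCircle → ℝ≥0∞) ((j / 2 ^ (n+d) : ℝ) : UnitAddCircle) :=
    fun j => Measure.dirac_apply' _ hUmeas
  have hsum : ∑ j ∈ Finset.range (2 ^ (n+d)), (stern (2 ^ (n+d) + j) : ℝ≥0∞) *
        (Measure.dirac ((j / 2 ^ (n+d) : ℝ) : UnitAddCircle)) U
      ≤ ((9 * (3 ^ d * Nat.fib (n + 3)) : ℕ) : ℝ≥0∞) := by
    have e1 : ∀ j : ℕ, (stern (2 ^ (n+d) + j) : ℝ≥0∞) *
          (Measure.dirac ((j / 2 ^ (n+d) : ℝ) : UnitAddCircle)) U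
        = if ((j / 2 ^ (n + d) : ℝ) : UnitAddCircle) ∈ U
            then (stern (2 ^ (n+d) + j) : ℝ≥0∞) else 0 := by
      intro j
      rw [hpt j, Set.indicator_apply]
      by_cases h : ((j / 2 ^ (n + d) : ℝ) : UnitAddCircle) ∈ U <;> simp [h]
    calc ∑ j ∈ Finset.range (2 ^ (n+d)), (stern (2 ^ (n+d) + j) : ℝ≥0∞) *
          (Measure.dirac ((j / 2 ^ (n+d) : ℝ) : UnitAddCircle)) U
        = ∑ j ∈ (Finset.range (2 ^ (n+d))).filter
            (fun j : ℕ => ((j / 2 ^ (n + d) : ℝ) : UnitAddCircle) ∈ U),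
            (stern (2 ^ (n+d) + j) : ℝ≥0∞) := by
          rw [Finset.sum_filter]
          exact Finset.sum_congr rfl fun j _ => e1 j
      _ = ((∑ j ∈ (Finset.range (2 ^ (n+d))).filter
            (fun j : ℕ => ((j / 2 ^ (n + d) : ℝ) : UnitAddCircle) ∈ U),
            stern (2 ^ (n+d) + j) : ℕ) : ℝ≥0∞) := by push_cast; rfl
      _ ≤ _ := by
          apply Nat.cast_le.mpr
          exact sum_filter_le hn hm
  calc ((3:ℝ≥0∞) ^ (n+d))⁻¹ * ∑ j ∈ Finset.range (2 ^ (n+d)), (stern (2 ^ (n+d) + j) : ℝ≥0∞) *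
        (Measure.dirac ((j / 2 ^ (n+d) : ℝ) : UnitAddCircle)) U
      ≤ ((3:ℝ≥0∞) ^ (n+d))⁻¹ * ((9 * (3 ^ d * Nat.fib (n + 3)) : ℕ) : ℝ≥0∞) :=
        mul_le_mul_right hsum _
    _ = (9 * Nat.fib (n + 3) : ℝ≥0∞) / 3 ^ n := by
        rw [pow_add, ENNReal.mul_inv (Or.inl (by positivity)) (Or.inl (ENNReal.pow_ne_top (by norm_num)))]
        push_cast
        rw [div_eq_mul_inv]
        rw [show ((3:ℝ≥0∞)^n)⁻¹ * (3^d)⁻¹ * (9 * (3 ^ d * (Nat.fib (n+3) : ℝ≥0∞)))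
            = ((3^d)⁻¹ * 3^d) * ((3:ℝ≥0∞)^n)⁻¹ * (9 * (Nat.fib (n+3) : ℝ≥0∞)) by ring]
        rw [ENNReal.inv_mul_cancel (by positivity) (ENNReal.pow_ne_top (by norm_num))]
        ring

lemma key_portmanteau (μ : Measure UnitAddCircle) (hμ : IsProbabilityMeasure μ)
    (hlim : ∀ f : C(UnitAddCircle, ℝ),
      Tendsto (fun n => ∫ x, f x ∂(sternMeasure n)) atTop (𝓝 (∫ x, f x ∂μ)))
    {K U : Set UnitAddCircle} (hK : IsClosed K) (hU : IsOpen U) (hKU : K ⊆ U) {b : ℝ}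
    (hb : ∀ᶠ k in atTop, ((sternMeasure k) U).toReal ≤ b) : (μ K).toReal ≤ b := by
  obtain ⟨f, hf0, hf1, hf01⟩ := exists_continuous_zero_one_of_isClosed
    (isClosed_compl_iff.mpr hU) hK (by rw [Set.disjoint_left]; intro x hx hxK; exact hx (hKU hxK))
  have hint : ∀ (ν : Measure UnitAddCircle) [IsFiniteMeasure ν], Integrable (fun x => f x) ν := by
    intro ν _
    apply (integrable_const (1:ℝ)).mono' f.continuous.aestronglyMeasurable
    apply ae_of_all
    intro x
    rw [Real.norm_eq_abs, abs_of_nonneg (hf01 x).1]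
    exact (hf01 x).2
  have h1 : (μ K).toReal ≤ ∫ x, f x ∂μ := by
    rw [← measureReal_def, ← integral_indicator_one hK.measurableSet]
    apply integral_mono ((integrable_const (1:ℝ)).indicator hK.measurableSet) (hint μ)
    intro x
    by_cases hx : x ∈ K
    · have h := hf1 hx
      simp only [Pi.one_apply] at h
      simp [Set.indicator_of_mem hx, h]
    · rw [Set.indicator_of_notMem hx]
      exact (hf01 x).1
  have h2 : ∀ k, ∫ x, f x ∂(sternMeasure k) ≤ ((sternMeasure k) U).toReal := by
    intro k
    rw [← measureReal_def, ← integral_indicator_one hU.measurableSet]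
    apply integral_mono (hint _) ((integrable_const (1:ℝ)).indicator hU.measurableSet)
    intro x
    by_cases hx : x ∈ U
    · simpa [Set.indicator_of_mem hx] using (hf01 x).2
    · rw [Set.indicator_of_notMem hx]
      have : f x = 0 := hf0 hx
      simp [this]
  exact h1.trans (le_of_tendsto (hlim f) (hb.mono fun k hk => (h2 k).trans hk))

/-- The distribution function F(x) = μ([0,x]) of the weak limit μ is Hölder continuous on
[0,1] with exponent log₂(3/τ), where τ is the golden ratio. -/
theorem sternLimit_distribution_holder (μ : Measure UnitAddCircle)
    (hμ : IsProbabilityMeasure μ)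
    (hlim : ∀ f : C(UnitAddCircle, ℝ),
      Tendsto (fun n => ∫ x, f x ∂(sternMeasure n)) atTop (𝓝 (∫ x, f x ∂μ)))
    (F : ℝ → ℝ)
    (hF : ∀ x : ℝ, F x =
      (μ ((fun y : ℝ => (y : UnitAddCircle)) '' Set.Icc (0 : ℝ) x)).toReal) :
    ∃ C : ℝ≥0, HolderOnWith C (Real.toNNReal (Real.logb 2 (3 / goldenRatio)))
      F (Set.Icc (0 : ℝ) 1) := by
  classical
  set α : ℝ := Real.logb 2 (3 / goldenRatio) with hαdef
  have hα0 : 0 ≤ α := alpha_nonneg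
  have hα1 : α ≤ 1 := alpha_le_one
  -- basic properties of F
  have hF0 : ∀ u : ℝ, 0 ≤ F u := fun u => by rw [hF u]; exact ENNReal.toReal_nonneg
  have hF1 : ∀ u : ℝ, F u ≤ 1 := by
    intro u
    rw [hF u]
    have h1 : μ ((fun y : ℝ => (y : UnitAddCircle)) '' Set.Icc (0 : ℝ) u) ≤ 1 := by
      rw [← hμ.measure_univ]
      exact measure_mono (Set.subset_univ _)
    calc (μ _).toReal ≤ (1:ℝ≥0∞).toReal := ENNReal.toReal_mono (by norm_num) h1
    _ = 1 := by simp
  have hFmono : ∀ u v : ℝ, u ≤ v → F u ≤ F v := by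
    intro u v huv
    rw [hF u, hF v]
    exact ENNReal.toReal_mono (measure_ne_top μ _)
      (measure_mono (Set.image_mono (Set.Icc_subset_Icc_right huv)))
  have hFdiff : ∀ u v : ℝ, 0 ≤ u → u ≤ v →
      F v - F u ≤ (μ ((fun y : ℝ => (y : UnitAddCircle)) '' Set.Icc u v)).toReal := by
    intro u v hu huv
    have hun : Set.Icc (0:ℝ) u ∪ Set.Icc u v = Set.Icc 0 v := Set.Icc_union_Icc_eq_Icc hu huv
    have hsub : (fun y : ℝ => (y : UnitAddCircle)) '' Set.Icc (0:ℝ) v ⊆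
        ((fun y : ℝ => (y : UnitAddCircle)) '' Set.Icc (0:ℝ) u) ∪
        ((fun y : ℝ => (y : UnitAddCircle)) '' Set.Icc u v) := by
      rw [← Set.image_union, hun]
    have hm : μ ((fun y : ℝ => (y : UnitAddCircle)) '' Set.Icc (0:ℝ) v)
        ≤ μ ((fun y : ℝ => (y : UnitAddCircle)) '' Set.Icc (0:ℝ) u)
          + μ ((fun y : ℝ => (y : UnitAddCircle)) '' Set.Icc u v) :=
      (measure_mono hsub).trans (measure_union_le _ _)
    have h2 : F v ≤ F u + (μ ((fun y : ℝ => (y : UnitAddCircle)) '' Set.Icc u v)).toReal := by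
      rw [hF v, hF u, ← ENNReal.toReal_add (measure_ne_top μ _) (measure_ne_top μ _)]
      exact ENNReal.toReal_mono (by
        exact ENNReal.add_ne_top.mpr ⟨measure_ne_top μ _, measure_ne_top μ _⟩) hm
    linarith
  refine ⟨100, ?_⟩
  suffices claim : ∀ u v : ℝ, u ∈ Set.Icc (0:ℝ) 1 → v ∈ Set.Icc (0:ℝ) 1 → u ≤ v →
      edist (F u) (F v) ≤ (100:ℝ≥0) * edist u v ^ ((Real.toNNReal α : ℝ≥0) : ℝ) by
    intro x hx y hy
    rcases le_total x y with h | h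
    · exact claim x y hx hy h
    · rw [edist_comm, edist_comm x y]
      exact claim y x hy hx h
  intro u v hu hv huv
  rcases eq_or_lt_of_le huv with rfl | hlt
  · simp
  -- main real inequality
  have hmain : F v - F u ≤ 100 * (v - u) ^ α := by
    have hvu0 : (0:ℝ) < v - u := by linarith
    have hvu1 : v - u ≤ 1 := by
      have := hu.1; have := hv.2; linarith
    have hex : ∃ N : ℕ, (1/2:ℝ)^(N+1) < v - u := by
      obtain ⟨N, hN⟩ := exists_pow_lt_of_lt_one hvu0 (by norm_num : (1/2:ℝ) < 1)
      exact ⟨N, lt_trans (pow_lt_pow_right_of_lt_one₀ (by norm_num) (by norm_num)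
        (Nat.lt_succ_self N)) hN⟩
    set N : ℕ := Nat.find hex with hNdef
    have hN : (1/2:ℝ)^(N+1) < v - u := Nat.find_spec hex
    have hN' : v - u ≤ (1/2:ℝ)^N := by
      rcases Nat.eq_zero_or_pos N with h0 | hpos
      · rw [h0]; simpa using hvu1
      · obtain ⟨M, hM⟩ := Nat.exists_eq_add_of_lt hpos
        have hMlt : M < N := by omega
        have := Nat.find_min hex hMlt
        push_neg at this
        have hsame : M + 1 = N := by omega
        rw [← hsame]; exact this
    -- lower bound on (v-u)^α
    have hrpow_base : ((1/2:ℝ)^(N+1):ℝ) ^ α ≤ (v - u) ^ α :=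
      Real.rpow_le_rpow (by positivity) hN.le hα0
    by_cases hN2 : N ≤ 2
    · -- large intervals: trivial bound
      have h8 : (1/8:ℝ) ≤ v - u := by
        have : ((1/2:ℝ))^3 ≤ (1/2:ℝ)^(N+1) :=
          pow_le_pow_of_le_one (by norm_num) (by norm_num) (by omega)
        calc (1/8:ℝ) = (1/2:ℝ)^3 := by norm_num
        _ ≤ (1/2:ℝ)^(N+1) := this
        _ ≤ v - u := hN.le
      have h1 : ((1/8:ℝ)) ^ α ≤ (v-u) ^ α := Real.rpow_le_rpow (by norm_num) h8 hα0
      have h2 : (1/8:ℝ) ≤ (1/8:ℝ) ^ α := by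
        have := Real.rpow_le_rpow_of_exponent_ge (x := (1/8:ℝ)) (by norm_num) (by norm_num) hα1
        simpa [Real.rpow_one] using this
      have h3 : (1:ℝ) ≤ 100 * (v-u)^α := by nlinarith
      have := hF1 v; have := hF0 u
      linarith
    · -- small intervals: use the measure estimate
      push_neg at hN2
      have hn3 : 3 ≤ N := hN2
      set n : ℕ := N with hndef
      set m : ℕ := ⌊(2:ℝ)^n * u⌋₊ with hmdef
      have hu0 : (0:ℝ) ≤ u := hu.1
      have hu1 : u < 1 := lt_of_lt_of_le hlt hv.2
      have hA : (0:ℝ) < 2^n := by positivity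
      have hm1 : (m:ℝ) ≤ 2^n * u := Nat.floor_le (by positivity)
      have hm2 : 2^n * u < (m:ℝ) + 1 := Nat.lt_floor_add_one _
      have hmlt : m < 2^n := by
        have h1 : (2:ℝ)^n * u < ((2^n : ℕ) : ℝ) := by
          push_cast
          nlinarith
        exact (Nat.floor_lt (by positivity)).mpr h1
      -- the enclosing open arc
      have hhalf : (2:ℝ)^n * (1/2:ℝ)^n = 1 := by
        rw [← mul_pow]; norm_num
      have hKU : Set.Icc u v ⊆ Set.Ioo (((m:ℝ)-1)/2^n) (((m:ℝ)+3)/2^n) := by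
        intro t ht
        constructor
        · rw [div_lt_iff₀ hA]
          have h1 : (2:ℝ)^n * u ≤ 2^n * t := mul_le_mul_of_nonneg_left ht.1 hA.le
          nlinarith
        · rw [lt_div_iff₀ hA]
          have h1 : (2:ℝ)^n * t ≤ 2^n * v := mul_le_mul_of_nonneg_left ht.2 hA.le
          have h2 : (2:ℝ)^n * (v - u) ≤ 2^n * (1/2:ℝ)^n :=
            mul_le_mul_of_nonneg_left hN' hA.le
          nlinarith
      set K : Set UnitAddCircle := (fun y : ℝ => (y : UnitAddCircle)) '' Set.Icc u v with hKdef
      set U : Set UnitAddCircle :=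
        (fun y : ℝ => (y : UnitAddCircle)) '' Set.Ioo (((m:ℝ)-1)/2^n) (((m:ℝ)+3)/2^n) with hUdef
      have hKclosed : IsClosed K := by
        apply IsCompact.isClosed
        exact isCompact_Icc.image (AddCircle.continuous_mk' 1)
      have hUopen : IsOpen U := by
        apply QuotientAddGroup.isOpenMap_coe (G := ℝ) (N := AddSubgroup.zmultiples (1:ℝ))
        exact isOpen_Ioo
      have hKsubU : K ⊆ U := Set.image_mono hKU
      -- uniform bound on sternMeasure k U for k ≥ n
      have hbval : ∀ d : ℕ, ((sternMeasure (n + d)) U).toReal ≤ 9 * (Nat.fib (n+3) : ℝ) / 3^n := by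
        intro d
        have h := sternMeasure_Ioo_le (d := d) hn3 hmlt
        have hne : (9 * Nat.fib (n + 3) : ℝ≥0∞) / 3 ^ n ≠ ⊤ :=
          (ENNReal.div_lt_top (by
            exact ENNReal.mul_ne_top (by norm_num) (ENNReal.natCast_ne_top _)) (by positivity)).ne
        calc ((sternMeasure (n + d)) U).toReal
            ≤ ((9 * Nat.fib (n + 3) : ℝ≥0∞) / 3 ^ n).toReal := ENNReal.toReal_mono hne h
        _ = 9 * (Nat.fib (n+3) : ℝ) / 3^n := by
            rw [ENNReal.toReal_div, ENNReal.toReal_mul]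
            norm_num
      have hb : ∀ᶠ k in atTop, ((sternMeasure k) U).toReal ≤ 9 * (Nat.fib (n+3) : ℝ) / 3^n := by
        rw [eventually_atTop]
        refine ⟨n, fun k hk => ?_⟩
        obtain ⟨d, rfl⟩ := Nat.exists_eq_add_of_le hk
        exact hbval d
      have hKle : (μ K).toReal ≤ 9 * (Nat.fib (n+3) : ℝ) / 3^n :=
        key_portmanteau μ hμ hlim hKclosed hUopen hKsubU hb
      have hdiff := hFdiff u v hu0 huv
      -- numerics
      have hfib : (Nat.fib (n+3) : ℝ) ≤ goldenRatio ^ (n+2) := by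
        have := (fib_le_gold_pow (n+2)).1
        rw [show n+2+1 = n+3 by ring] at this
        exact this
      have hbase : ((1/2:ℝ)) ^ α = goldenRatio / 3 := by
        have h2 : (2:ℝ) ^ α = 3 / goldenRatio := two_rpow_alpha
        rw [show (1/2:ℝ) = (2:ℝ)⁻¹ by norm_num, Real.inv_rpow (by norm_num), h2, inv_div]
      have hpow : ∀ j : ℕ, ((1/2:ℝ)^j) ^ α = (goldenRatio / 3) ^ j := by
        intro j
        rw [← Real.rpow_natCast (1/2:ℝ) j, ← Real.rpow_mul (by norm_num), mul_comm,
          Real.rpow_mul (by norm_num), hbase, Real.rpow_natCast]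
      have hstep : ((goldenRatio/3):ℝ)^(n+1) ≤ (v - u) ^ α := by
        rw [← hpow (n+1)]
        exact hrpow_base
      have hgpos : (0:ℝ) < goldenRatio := goldenRatio_pos
      have hg3pos : (0:ℝ) < goldenRatio / 3 := by positivity
      have hstep2 : ((goldenRatio/3):ℝ)^n ≤ 2 * (v - u) ^ α := by
        have he : ((goldenRatio/3):ℝ)^n = (goldenRatio/3)^(n+1) * (3/goldenRatio) := by
          rw [pow_succ]
          field_simp
        rw [he]
        have h32 : (3:ℝ)/goldenRatio ≤ 2 := by
          rw [div_le_iff₀ hgpos]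
          linarith [gold_lt_three_halves']
        have hp1 : (0:ℝ) ≤ (goldenRatio/3)^(n+1) := by positivity
        calc ((goldenRatio/3):ℝ)^(n+1) * (3/goldenRatio)
            ≤ (goldenRatio/3)^(n+1) * 2 := by
              apply mul_le_mul_of_nonneg_left h32 hp1
        _ ≤ (v - u) ^ α * 2 := by
              apply mul_le_mul_of_nonneg_right hstep (by norm_num)
        _ = 2 * (v - u) ^ α := by ring
      have hfinal : 9 * (Nat.fib (n+3) : ℝ) / 3^n ≤ 100 * (v - u) ^ α := by
        have hva : (0:ℝ) ≤ (v-u)^α := Real.rpow_nonneg (by linarith) α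
        have hg2 : goldenRatio ^ 2 ≤ 4 := by nlinarith [goldenRatio_lt_two, goldenRatio_pos]
        have hgen : ∀ g : ℝ, 9 * g^(n+2)/3^n = 9 * g^2 * (g/3)^n := by
          intro g
          rw [div_pow, pow_add]
          ring
        have h2 : 9 * goldenRatio^(n+2)/3^n = 9 * goldenRatio^2 * (goldenRatio/3)^n := hgen _
        have e3 : 9 * goldenRatio^2 * (goldenRatio/3)^n ≤ 9 * goldenRatio^2 * (2*(v-u)^α) :=
          mul_le_mul_of_nonneg_left hstep2 (by positivity)
        have e4 : 9 * goldenRatio^2 * (2*(v-u)^α) ≤ 100 * (v-u)^α := by nlinarith [hg2, hva]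
        calc 9 * (Nat.fib (n+3) : ℝ) / 3^n ≤ 9 * goldenRatio^(n+2) / 3^n := by gcongr
        _ = 9 * goldenRatio^2 * (goldenRatio/3)^n := h2
        _ ≤ 100 * (v - u) ^ α := e3.trans e4
      linarith
  -- convert to edist form
  have h0 : 0 ≤ F v - F u := by
    have := hFmono u v huv
    linarith
  have hedF : edist (F u) (F v) = ENNReal.ofReal (F v - F u) := by
    rw [edist_dist, Real.dist_eq, abs_sub_comm, abs_of_nonneg h0]
  have hedx : edist u v = ENNReal.ofReal (v - u) := by
    rw [edist_dist, Real.dist_eq, abs_sub_comm, abs_of_nonneg (by linarith)]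
  rw [hedF, hedx]
  have hcoe : ((Real.toNNReal α : ℝ≥0) : ℝ) = α := Real.coe_toNNReal _ hα0
  rw [hcoe]
  calc ENNReal.ofReal (F v - F u) ≤ ENNReal.ofReal (100 * (v - u) ^ α) :=
        ENNReal.ofReal_le_ofReal hmain
  _ = ENNReal.ofReal 100 * ENNReal.ofReal ((v - u) ^ α) :=
        ENNReal.ofReal_mul (by norm_num)
  _ = (100:ℝ≥0) * ENNReal.ofReal (v - u) ^ α := by
        rw [ENNReal.ofReal_rpow_of_nonneg (by linarith) hα0]
        norm_num
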